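/- Let R be a finite index set, K_r ∈ M_d⊗M_d with blocks K_{r;hh'}, and E(x) = Tr₂(Σ_{r∈R} K_r* x K_r). Then E is D_e-preserving (i.e. E(a⊗b) is a diagonal matrix whenever a, b ∈ M_d are diagonal) if and only if for all indices m, m' and all j ≠ j' one has Σ_{r∈R} Tr(K_{r;mj}* E_{m'm'} K_{r;mj'}) = 0, equivalently Σ_{r∈R} (K_{r;mj'} K_{r;mj}*)(m',m') = 0. In that case, for all m, m': E(E_{mm}⊗E_{m'm'}) = Σ_j Tr(Σ_{r∈R} K_{r;mj}* E_{m'm'} K_{r;mj}) · E_{jj}. -/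

import Mathlib

open Matrix BigOperators

/-- Kronecker tensor product of two `d × d` matrices, indexed by `Fin d × Fin d`. -/
noncomputable def mtens {d : ℕ} (A B : Matrix (Fin d) (Fin d) ℂ) :
    Matrix (Fin d × Fin d) (Fin d × Fin d) ℂ :=
  fun p q => A p.1 q.1 * B p.2 q.2

/-- Partial trace over the second tensor factor. -/
noncomputable def ptr2 {d : ℕ} (X : Matrix (Fin d × Fin d) (Fin d × Fin d) ℂ) :
    Matrix (Fin d) (Fin d) ℂ :=
  fun i j => ∑ k, X (i, k) (j, k)

/-- The `(h,h')` block of `K ∈ M_d ⊗ M_d`. -/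
noncomputable def blk {d : ℕ} (K : Matrix (Fin d × Fin d) (Fin d × Fin d) ℂ) (h h' : Fin d) :
    Matrix (Fin d) (Fin d) ℂ :=
  fun a b => K (h, a) (h', b)

/-- The transition expectation `E(x) = Tr₂(Σ_r K_r* x K_r)`. -/
noncomputable def Emap {d : ℕ} {R : Type*} [Fintype R]
    (K : R → Matrix (Fin d × Fin d) (Fin d × Fin d) ℂ)
    (x : Matrix (Fin d × Fin d) (Fin d × Fin d) ℂ) : Matrix (Fin d) (Fin d) ℂ :=
  ptr2 (∑ r, (K r)ᴴ * x * K r)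

/-- `E` is `D_e`-preserving: it maps (tensor products of) diagonal matrices to
diagonal matrices. -/
def DePreserving {d : ℕ} {R : Type*} [Fintype R]
    (K : R → Matrix (Fin d × Fin d) (Fin d × Fin d) ℂ) : Prop :=
  ∀ a b : Matrix (Fin d) (Fin d) ℂ, a.IsDiag → b.IsDiag → (Emap K (mtens a b)).IsDiag

section aux
variable {d : ℕ} {R : Type*} [Fintype R]

lemma mtens_diag {a b : Matrix (Fin d) (Fin d) ℂ} (ha : a.IsDiag) (hb : b.IsDiag)
    (s t : Fin d × Fin d) : mtens a b s t = if t = s then a s.1 s.1 * b s.2 s.2 else 0 := by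
  by_cases h : t = s
  · subst h; simp [mtens]
  · rw [if_neg h]
    by_cases h1 : s.1 = t.1
    · by_cases h2 : s.2 = t.2
      · exact absurd (Prod.ext h1.symm h2.symm) h
      · simp [mtens, hb h2]
    · simp [mtens, ha h1]

lemma emap_diag_entry (K : R → Matrix (Fin d × Fin d) (Fin d × Fin d) ℂ)
    {a b : Matrix (Fin d) (Fin d) ℂ} (ha : a.IsDiag) (hb : b.IsDiag) (i j : Fin d) :
    Emap K (mtens a b) i j =
      ∑ m, ∑ m', a m m * b m' m' *
        ∑ r, (blk (K r) m j * (blk (K r) m i)ᴴ) m' m' := by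
  unfold Emap ptr2
  simp only [Matrix.sum_apply, Matrix.mul_apply, Matrix.conjTranspose_apply, blk,
    mtens_diag ha hb, ite_mul, zero_mul, mul_ite, mul_zero,
    Finset.sum_ite_eq, Finset.sum_ite_eq', Finset.mem_univ, if_true]
  conv_lhs => enter [2, k]; rw [Finset.sum_comm]
  conv_lhs => rw [Finset.sum_comm]
  rw [Fintype.sum_prod_type]
  refine Finset.sum_congr rfl fun m _ => ?_
  refine Finset.sum_congr rfl fun m' _ => ?_
  rw [Finset.sum_comm, Finset.mul_sum]
  refine Finset.sum_congr rfl fun r _ => ?_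
  rw [Finset.mul_sum]
  refine Finset.sum_congr rfl fun k _ => ?_
  ring


lemma trace_form (A B : Matrix (Fin d) (Fin d) ℂ) (m' : Fin d) :
    Matrix.trace (Aᴴ * Matrix.single m' m' 1 * B) = (B * Aᴴ) m' m' := by
  simp only [Matrix.trace, Matrix.diag, Matrix.mul_apply, Matrix.conjTranspose_apply,
    Matrix.single, Matrix.of_apply, ite_and, mul_ite, ite_mul, mul_zero, zero_mul,
    mul_one, Finset.sum_ite_eq, Finset.sum_ite_eq', Finset.mem_univ, if_true]
  exact Finset.sum_congr rfl fun k _ => by ring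

lemma std_isDiag (m : Fin d) : (Matrix.single m m (1:ℂ)).IsDiag := by
  intro p q hpq
  simp only [Matrix.single, Matrix.of_apply, ite_eq_right_iff, and_imp]
  rintro rfl rfl; exact absurd rfl hpq

lemma emap_std_entry (K : R → Matrix (Fin d × Fin d) (Fin d × Fin d) ℂ) (m m' i j : Fin d) :
    Emap K (mtens (Matrix.single m m 1) (Matrix.single m' m' 1)) i j =
      ∑ r, (blk (K r) m j * (blk (K r) m i)ᴴ) m' m' := by
  rw [emap_diag_entry K (std_isDiag m) (std_isDiag m') i j]
  simp [Matrix.single, Matrix.of_apply, ite_mul, zero_mul,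
    Finset.sum_ite_eq, Finset.sum_ite_eq']
end aux

/-- Characterization of `D_e`-preserving transition expectations, the
equivalent entrywise form of the condition, and the resulting diagonal formula. -/
theorem stmt4 {d : ℕ} (hd : 1 ≤ d) {R : Type*} [Fintype R]
    (K : R → Matrix (Fin d × Fin d) (Fin d × Fin d) ℂ) :
    (DePreserving K ↔
      ∀ m m' j j' : Fin d, j ≠ j' →
        (∑ r, Matrix.trace ((blk (K r) m j)ᴴ * Matrix.single m' m' 1 *
          blk (K r) m j')) = 0) ∧
    (DePreserving K ↔
      ∀ m m' j j' : Fin d, j ≠ j' →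
        (∑ r, (blk (K r) m j' * (blk (K r) m j)ᴴ) m' m') = 0) ∧
    (DePreserving K →
      ∀ m m' : Fin d,
        Emap K (mtens (Matrix.single m m 1) (Matrix.single m' m' 1)) =
          ∑ j, Matrix.trace (∑ r, (blk (K r) m j)ᴴ * Matrix.single m' m' 1 *
            blk (K r) m j) • Matrix.single j j 1) := by
  have hC : DePreserving K ↔ ∀ m m' j j' : Fin d, j ≠ j' →
      (∑ r, (blk (K r) m j' * (blk (K r) m j)ᴴ) m' m') = 0 := by
    constructor
    · intro h m m' j j' hjj
      have h2 : Emap K (mtens (Matrix.single m m 1)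
          (Matrix.single m' m' 1)) j j' = 0 :=
        h _ _ (std_isDiag m) (std_isDiag m') hjj
      rwa [emap_std_entry] at h2
    · intro h a b ha hb i j hij
      rw [Matrix.IsDiag] at *
      show Emap K (mtens a b) i j = 0
      rw [emap_diag_entry K ha hb i j]
      refine Finset.sum_eq_zero fun m _ => Finset.sum_eq_zero fun m' _ => ?_
      rw [h m m' i j hij, mul_zero]
  have htr : ∀ m m' j j' : Fin d,
      (∑ r, Matrix.trace ((blk (K r) m j)ᴴ * Matrix.single m' m' 1 * blk (K r) m j'))
        = ∑ r, (blk (K r) m j' * (blk (K r) m j)ᴴ) m' m' :=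
    fun m m' j j' => Finset.sum_congr rfl fun r _ => trace_form _ _ _
  refine ⟨?_, hC, ?_⟩
  · rw [hC]
    exact ⟨fun h m m' j j' hjj => (htr m m' j j').trans (h m m' j j' hjj),
      fun h m m' j j' hjj => (htr m m' j j').symm ▸ h m m' j j' hjj⟩
  · intro h m m'
    ext i j
    rw [emap_std_entry]
    have hrhs : (∑ j0, Matrix.trace (∑ r, (blk (K r) m j0)ᴴ * Matrix.single m' m' 1 *
        blk (K r) m j0) • Matrix.single j0 j0 (1:ℂ)) i j
        = if i = j then ∑ r, (blk (K r) m j * (blk (K r) m j)ᴴ) m' m' else 0 := by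
      have h1 : ∀ j0 : Fin d, Matrix.trace (∑ r, (blk (K r) m j0)ᴴ *
          Matrix.single m' m' 1 * blk (K r) m j0)
          = ∑ r, (blk (K r) m j0 * (blk (K r) m j0)ᴴ) m' m' := fun j0 => by
        rw [Matrix.trace_sum]; exact htr m m' j0 j0
      simp only [Matrix.sum_apply, Matrix.smul_apply, h1, smul_eq_mul]
      simp only [Matrix.single, Matrix.of_apply, ite_and, mul_ite, mul_one, mul_zero,
        Finset.sum_ite_eq, Finset.mem_univ, if_true]
      by_cases hij : i = j
      · subst hij; simp
      · simp [hij]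
    rw [hrhs]
    by_cases hij : i = j
    · subst hij; rw [if_pos rfl]
    · rw [if_neg hij, (hC.mp h) m m' i j hij]
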